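/- Let f : V → V be a nonexpansive map on a finite dimensional real normed space (V,‖·‖). Suppose R > 0 is such that Fix(f) = {x : f(x) = x} is nonempty and contained in the open ball of radius R about 0, and let ε = min{‖x − f(x)‖ : ‖x‖ = R}, which is positive. Then every nonexpansive map g : V → V satisfying sup{‖f(x) − g(x)‖ : ‖x‖ = R} < ε/2 has a nonempty set of fixed points, and Fix(g) is contained in the closed ball of radius R about 0. -/

import Mathlib

open Set Metric Filter Topology

section aux

variable {V : Type*} [NormedAddCommGroup V] [NormedSpace ℝ V] [FiniteDimensional ℝ V]

/-- Existence of a fixed point of `x ↦ b + t • (F x - b)` for `t ∈ [0,1)`. -/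
lemma contr_fixed (F : V → V) (hF : ∀ x y : V, ‖F x - F y‖ ≤ ‖x - y‖)
    (b : V) {t : ℝ} (ht : t ∈ Set.Ico (0:ℝ) 1) :
    ∃ x : V, x = b + t • (F x - b) := by
  have : Nonempty V := ⟨b⟩
  set h : V → V := fun x => b + t • (F x - b) with hh
  have hlip : LipschitzWith ⟨t, ht.1⟩ h := by
    apply LipschitzWith.of_dist_le_mul
    intro x y
    have e : h x - h y = t • (F x - F y) := by simp only [hh]; module
    rw [dist_eq_norm, dist_eq_norm, e, norm_smul, Real.norm_eq_abs,
      abs_of_nonneg ht.1]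
    have := hF x y
    have ht0 := ht.1
    push_cast
    change _ ≤ t * ‖x - y‖
    nlinarith
  have hC : ContractingWith ⟨t, ht.1⟩ h := ⟨by exact_mod_cast ht.2, hlip⟩
  obtain ⟨y, hy, -⟩ := hC.exists_fixedPoint b (edist_ne_top _ _)
  exact ⟨y, hy.symm⟩

/-- Construction of the contraction path toward `F` based at `b`. -/
lemma path_lemma (F : V → V) (hF : ∀ x y : V, ‖F x - F y‖ ≤ ‖x - y‖) (b : V) :
    ∃ φ : ℝ → V, (∀ t ∈ Set.Ico (0:ℝ) 1, φ t = b + t • (F (φ t) - b)) ∧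
      ∀ t₁ ∈ Set.Ico (0:ℝ) 1, ContinuousOn φ (Set.Icc 0 t₁) := by
  have H : ∀ t ∈ Set.Ico (0:ℝ) 1, ∃ x : V, x = b + t • (F x - b) :=
    fun t ht => contr_fixed F hF b ht
  choose! φ hφ using H
  refine ⟨φ, hφ, ?_⟩
  intro t₁ ht₁
  have key1 : ∀ t ∈ Set.Ico (0:ℝ) 1, (1 - t) * ‖F (φ t) - b‖ ≤ ‖F b - b‖ := by
    intro t ht
    have h1 : ‖F (φ t) - b‖ ≤ ‖φ t - b‖ + ‖F b - b‖ := by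
      calc ‖F (φ t) - b‖ ≤ ‖F (φ t) - F b‖ + ‖F b - b‖ := by
            have e2 : F (φ t) - b = (F (φ t) - F b) + (F b - b) := by abel
            rw [e2]; exact norm_add_le _ _
        _ ≤ ‖φ t - b‖ + ‖F b - b‖ := by linarith [hF (φ t) b]
    have h2 : ‖φ t - b‖ = t * ‖F (φ t) - b‖ := by
      have e : φ t - b = t • (F (φ t) - b) := by
        conv_lhs => rw [hφ t ht]
        abel
      rw [e, norm_smul, Real.norm_eq_abs, abs_of_nonneg ht.1]
    nlinarith
  have hd : 0 < 1 - t₁ := by linarith [ht₁.2]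
  have hsub : Set.Icc (0:ℝ) t₁ ⊆ Set.Ico (0:ℝ) 1 := fun s hs =>
    ⟨hs.1, lt_of_le_of_lt hs.2 ht₁.2⟩
  have key2 : ∀ s ∈ Set.Icc (0:ℝ) t₁, ∀ t ∈ Set.Icc (0:ℝ) t₁,
      dist (φ s) (φ t) ≤ (‖F b - b‖ / (1 - t₁) ^ 2) * dist s t := by
    intro s hs t ht
    have hs' := hsub hs
    have ht' := hsub ht
    have hus := hφ s hs'
    have hut := hφ t ht'
    obtain ⟨A, hA⟩ : ∃ A, F (φ s) = A := ⟨_, rfl⟩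
    obtain ⟨B, hB⟩ : ∃ B, F (φ t) = B := ⟨_, rfl⟩
    rw [hA] at hus
    rw [hB] at hut
    have hAB : ‖A - B‖ ≤ ‖φ s - φ t‖ := by rw [← hA, ← hB]; exact hF _ _
    have k1 : (1 - t) * ‖B - b‖ ≤ ‖F b - b‖ := by rw [← hB]; exact key1 t ht'
    have e : φ s - φ t = s • (A - B) + (s - t) • (B - b) := by
      rw [hus, hut]; module
    have h3 : ‖φ s - φ t‖ ≤ s * ‖φ s - φ t‖ + |s - t| * ‖B - b‖ := by
      calc ‖φ s - φ t‖ ≤ ‖s • (A - B)‖ + ‖(s - t) • (B - b)‖ := by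
            rw [e]; exact norm_add_le _ _
        _ ≤ s * ‖φ s - φ t‖ + |s - t| * ‖B - b‖ := by
            rw [norm_smul, norm_smul, Real.norm_eq_abs, Real.norm_eq_abs,
              abs_of_nonneg hs'.1]
            have hs0 := hs'.1
            nlinarith [abs_nonneg (s - t)]
    rw [dist_eq_norm, dist_eq_norm]
    set N := ‖φ s - φ t‖ with hN
    set d := |s - t| with hdd
    set C := ‖B - b‖ with hCC
    set c0 := ‖F b - b‖ with hc0
    have hN0 : 0 ≤ N := norm_nonneg _
    have hd0 : 0 ≤ d := abs_nonneg _
    have hC0 : 0 ≤ C := norm_nonneg _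
    have hst : ‖s - t‖ = d := Real.norm_eq_abs _
    rw [hst]
    rw [div_mul_eq_mul_div, le_div_iff₀ (by positivity)]
    have h4 : (1 - t₁) * N ≤ d * C := by
      nlinarith [mul_nonneg (sub_nonneg.2 hs.2) hN0]
    have h5 : (1 - t₁) * (d * C) ≤ d * c0 := by
      nlinarith [mul_le_mul_of_nonneg_left k1 hd0,
        mul_nonneg (sub_nonneg.2 ht.2) (mul_nonneg hd0 hC0)]
    nlinarith [mul_le_mul_of_nonneg_left h4 hd.le]
  have hlip : LipschitzOnWith (Real.toNNReal (‖F b - b‖ / (1 - t₁) ^ 2)) φ (Set.Icc 0 t₁) := by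
    rw [lipschitzOnWith_iff_dist_le_mul]
    intro x hx y hy
    refine le_trans (key2 x hx y hy) ?_
    have h6 : (‖F b - b‖ / (1 - t₁) ^ 2) ≤ (Real.toNNReal (‖F b - b‖ / (1 - t₁) ^ 2) : ℝ) :=
      Real.le_coe_toNNReal _
    nlinarith [dist_nonneg (x := x) (y := y)]
  exact hlip.continuousOn

/-- Compactness limit along the path gives a fixed point of `F`. -/
lemma limit_lemma (F : V → V) (hF : ∀ x y : V, ‖F x - F y‖ ≤ ‖x - y‖) (b : V)
    (φ : ℝ → V) (hφ : ∀ t ∈ Set.Ico (0:ℝ) 1, φ t = b + t • (F (φ t) - b))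
    (C : ℝ) (hC : ∀ t ∈ Set.Ico (0:ℝ) 1, ‖φ t‖ ≤ C) :
    ∃ x : V, F x = x ∧ x ∈ closure (φ '' Set.Ico (0:ℝ) 1) := by
  set u : ℕ → ℝ := fun n => 1 - 1 / (n + 1) with hu
  have hmem : ∀ n : ℕ, u n ∈ Set.Ico (0:ℝ) 1 := by
    intro n
    have h1 : 0 < 1 / ((n:ℝ) + 1) := by positivity
    have h2 : 1 / ((n:ℝ) + 1) ≤ 1 := by
      rw [div_le_one (by positivity)]
      linarith [Nat.cast_nonneg (α := ℝ) n]
    constructor <;> simp only [hu] <;> linarith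
  have htu : Tendsto u atTop (𝓝 1) := by
    rw [hu]
    have h := (tendsto_const_nhds (x := (1:ℝ)) (f := atTop (α := ℕ))).sub
      tendsto_one_div_add_atTop_nhds_zero_nat
    simpa using h
  have hball : ∀ n : ℕ, φ (u n) ∈ Metric.closedBall (0:V) C := by
    intro n
    rw [mem_closedBall_zero_iff]
    exact hC (u n) (hmem n)
  obtain ⟨a, ha, σ, hσ, hlim⟩ :=
    (isCompact_closedBall (0:V) C).tendsto_subseq hball
  have hFcont : Continuous F := by
    have : LipschitzWith 1 F := by
      apply LipschitzWith.of_dist_le_mul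
      intro x y
      rw [dist_eq_norm, dist_eq_norm]
      simpa using hF x y
    exact this.continuous
  have htuσ : Tendsto (fun n => u (σ n)) atTop (𝓝 1) :=
    htu.comp hσ.tendsto_atTop
  have hFlim : Tendsto (fun n => F (φ (u (σ n)))) atTop (𝓝 (F a)) :=
    (hFcont.tendsto a).comp hlim
  have h2 : Tendsto (fun n => b + u (σ n) • (F (φ (u (σ n))) - b)) atTop
      (𝓝 (b + (1:ℝ) • (F a - b))) :=
    tendsto_const_nhds.add (htuσ.smul (hFlim.sub tendsto_const_nhds))
  have h3 : (fun n => b + u (σ n) • (F (φ (u (σ n))) - b)) = fun n => φ (u (σ n)) := by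
    funext n
    exact (hφ (u (σ n)) (hmem (σ n))).symm
  rw [h3] at h2
  have ha2 : a = b + (1:ℝ) • (F a - b) := tendsto_nhds_unique hlim h2
  have haf : F a = a := by
    obtain ⟨c, hc⟩ : ∃ c, F a = c := ⟨_, rfl⟩
    rw [hc] at ha2 ⊢
    rw [one_smul] at ha2
    rw [ha2]; abel
  refine ⟨a, haf, ?_⟩
  exact mem_closure_of_tendsto hlim
    (Filter.Eventually.of_forall fun n => Set.mem_image_of_mem φ (hmem (σ n)))

end aux

/-- If `f` is nonexpansive with nonempty fixed point set contained in the open ball of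
radius `R` about `0`, and `ε` is the minimum of `‖x - f x‖` over the sphere of radius
`R`, then `ε > 0` and every nonexpansive `g` which is within `ε/2` of `f` on that sphere
has a nonempty fixed point set contained in the closed ball of radius `R`. -/
theorem stmt7 {V : Type*} [NormedAddCommGroup V] [NormedSpace ℝ V] [FiniteDimensional ℝ V]
    (f : V → V) (hf : ∀ x y : V, ‖f x - f y‖ ≤ ‖x - y‖)
    (R : ℝ) (hR : 0 < R) (hne : {x : V | f x = x}.Nonempty)
    (hsub : {x : V | f x = x} ⊆ Metric.ball 0 R)
    (ε : ℝ) (hε : IsLeast {r : ℝ | ∃ x : V, ‖x‖ = R ∧ r = ‖x - f x‖} ε) :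
    0 < ε ∧ ∀ g : V → V, (∀ x y : V, ‖g x - g y‖ ≤ ‖x - y‖) →
      (∀ x : V, ‖x‖ = R → ‖f x - g x‖ < ε / 2) →
      {x : V | g x = x}.Nonempty ∧ {x : V | g x = x} ⊆ Metric.closedBall 0 R := by
  obtain ⟨p, hp⟩ := hne
  have hp' : f p = p := hp
  have hpR : ‖p‖ < R := by
    have := hsub hp
    rwa [Metric.mem_ball, dist_zero_right] at this
  have hεle : ∀ x : V, ‖x‖ = R → ε ≤ ‖x - f x‖ := fun x hx => hε.2 ⟨x, hx, rfl⟩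
  have hεpos : 0 < ε := by
    obtain ⟨x₀, hx₀R, hx₀⟩ := hε.1
    rcases lt_or_eq_of_le (by rw [hx₀]; exact norm_nonneg _ : (0:ℝ) ≤ ε) with h | h
    · exact h
    · exfalso
      have : f x₀ = x₀ := by
        have : ‖x₀ - f x₀‖ = 0 := by rw [← hx₀, ← h]
        have := sub_eq_zero.1 (norm_eq_zero.1 this)
        exact this.symm
      have := hsub this
      rw [Metric.mem_ball, dist_zero_right, hx₀R] at this
      exact lt_irrefl R this
  refine ⟨hεpos, fun g hg hclose => ?_⟩
  -- no crossing for the `g`-path based at `p`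
  have hcross_g : ∀ t ∈ Set.Ico (0:ℝ) 1, ∀ x : V, ‖x‖ = R →
      x = p + t • (g x - p) → False := by
    intro t ht x hxR hx
    have h1 : ε ≤ ‖x - f x‖ := hεle x hxR
    have h2 : ‖f x - g x‖ < ε / 2 := hclose x hxR
    obtain ⟨w, hw⟩ : ∃ w, g x = w := ⟨_, rfl⟩
    rw [hw] at hx h2
    have e1 : x - w = (1 - t) • (p - w) := by rw [hx]; module
    have e2 : x - p = t • (w - p) := by rw [hx]; module
    have h3 : ‖x - w‖ = (1 - t) * ‖p - w‖ := by
      rw [e1, norm_smul, Real.norm_eq_abs, abs_of_nonneg (by linarith [ht.2])]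
    have h4 : ‖x - p‖ = t * ‖p - w‖ := by
      rw [e2, norm_smul, Real.norm_eq_abs, abs_of_nonneg ht.1, norm_sub_rev]
    have h5 : ‖p - w‖ ≤ ‖p - f x‖ + ‖f x - w‖ := by
      have e3 : p - w = (p - f x) + (f x - w) := by abel
      rw [e3]; exact norm_add_le _ _
    have h6 : ‖p - f x‖ ≤ ‖x - p‖ := by
      calc ‖p - f x‖ = ‖f p - f x‖ := by rw [hp']
        _ ≤ ‖p - x‖ := hf p x
        _ = ‖x - p‖ := norm_sub_rev _ _
    have h8 : ε / 2 < ‖x - w‖ := by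
      have e4 : x - f x = (x - w) + (w - f x) := by abel
      have h10 : ‖x - f x‖ ≤ ‖x - w‖ + ‖w - f x‖ := by rw [e4]; exact norm_add_le _ _
      have h9 : ‖w - f x‖ = ‖f x - w‖ := norm_sub_rev _ _
      linarith
    have hD : (1 - t) * ‖p - w‖ < ε / 2 := by linarith [h4, h5, h6, h2]
    linarith [h3, h8, hD]
  -- existence of a fixed point of `g` in the closed ball
  obtain ⟨φ, hφ, hφc⟩ := path_lemma g hg p
  have hφ0 : φ 0 = p := by
    have := hφ 0 ⟨le_refl 0, one_pos⟩
    simpa using this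
  have hlt : ∀ t ∈ Set.Ico (0:ℝ) 1, ‖φ t‖ < R := by
    intro t ht
    by_contra hcon
    push_neg at hcon
    have hcont : ContinuousOn (fun s => ‖φ s‖) (Set.Icc 0 t) := (hφc t ht).norm
    have := intermediate_value_Icc ht.1 hcont
    have hRmem : R ∈ Set.Icc ‖φ 0‖ ‖φ t‖ := by
      constructor
      · rw [hφ0]; exact hpR.le
      · exact hcon
    obtain ⟨s, hs, hsR⟩ := this hRmem
    have hs' : s ∈ Set.Ico (0:ℝ) 1 := ⟨hs.1, lt_of_le_of_lt hs.2 ht.2⟩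
    exact hcross_g s hs' (φ s) hsR (hφ s hs')
  have hbd : ∀ t ∈ Set.Ico (0:ℝ) 1, ‖φ t‖ ≤ R := fun t ht => (hlt t ht).le
  obtain ⟨x₁, hx₁, hx₁cl⟩ := limit_lemma g hg p φ hφ R hbd
  have hx₁ball : x₁ ∈ Metric.closedBall (0:V) R := by
    have himg : φ '' Set.Ico (0:ℝ) 1 ⊆ Metric.closedBall (0:V) R := by
      rintro _ ⟨t, ht, rfl⟩
      rw [mem_closedBall_zero_iff]
      exact hbd t ht
    exact closure_minimal himg Metric.isClosed_closedBall hx₁cl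
  refine ⟨⟨x₁, hx₁⟩, ?_⟩
  -- inclusion of the fixed point set in the closed ball
  intro q hq
  have hgq : g q = q := hq
  rw [Metric.mem_closedBall, dist_zero_right]
  by_contra hqR
  push_neg at hqR
  -- no crossing for the `f`-path based at `q`
  have hcross_f : ∀ t ∈ Set.Ico (0:ℝ) 1, ∀ x : V, ‖x‖ = R →
      x = q + t • (f x - q) → False := by
    intro t ht x hxR hx
    have h1 : ε ≤ ‖x - f x‖ := hεle x hxR
    have h2 : ‖f x - g x‖ < ε / 2 := hclose x hxR
    obtain ⟨w, hw⟩ : ∃ w, f x = w := ⟨_, rfl⟩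
    rw [hw] at hx h1 h2
    have e1 : x - w = (1 - t) • (q - w) := by rw [hx]; module
    have e2 : x - q = t • (w - q) := by rw [hx]; module
    have h3 : ‖x - w‖ = (1 - t) * ‖q - w‖ := by
      rw [e1, norm_smul, Real.norm_eq_abs, abs_of_nonneg (by linarith [ht.2])]
    have h4 : ‖x - q‖ = t * ‖q - w‖ := by
      rw [e2, norm_smul, Real.norm_eq_abs, abs_of_nonneg ht.1, norm_sub_rev]
    have h5 : ‖q - w‖ ≤ ‖q - g x‖ + ‖g x - w‖ := by
      have e3 : q - w = (q - g x) + (g x - w) := by abel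
      rw [e3]; exact norm_add_le _ _
    have h6 : ‖q - g x‖ ≤ ‖x - q‖ := by
      calc ‖q - g x‖ = ‖g q - g x‖ := by rw [hgq]
        _ ≤ ‖q - x‖ := hg q x
        _ = ‖x - q‖ := norm_sub_rev _ _
    have h9 : ‖g x - w‖ = ‖w - g x‖ := norm_sub_rev _ _
    linarith [h3, h4, h5, h6, h9, h1, h2, hεpos]
  obtain ⟨ψ, hψ, hψc⟩ := path_lemma f hf q
  have hψ0 : ψ 0 = q := by
    have := hψ 0 ⟨le_refl 0, one_pos⟩
    simpa using this
  have hgt : ∀ t ∈ Set.Ico (0:ℝ) 1, R < ‖ψ t‖ := by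
    intro t ht
    by_contra hcon
    push_neg at hcon
    have hcont : ContinuousOn (fun s => ‖ψ s‖) (Set.Icc 0 t) := (hψc t ht).norm
    have := intermediate_value_Icc' ht.1 hcont
    have hRmem : R ∈ Set.Icc ‖ψ t‖ ‖ψ 0‖ := by
      constructor
      · exact hcon
      · rw [hψ0]; exact hqR.le
    obtain ⟨s, hs, hsR⟩ := this hRmem
    have hs' : s ∈ Set.Ico (0:ℝ) 1 := ⟨hs.1, lt_of_le_of_lt hs.2 ht.2⟩
    exact hcross_f s hs' (ψ s) hsR (hψ s hs')
  have hbd2 : ∀ t ∈ Set.Ico (0:ℝ) 1, ‖ψ t‖ ≤ ‖p‖ + ‖q - p‖ := by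
    intro t ht
    have e5 : ψ t - p = (1 - t) • (q - p) + t • (f (ψ t) - p) := by
      conv_lhs => rw [hψ t ht]
      module
    have h10 : ‖f (ψ t) - p‖ ≤ ‖ψ t - p‖ := by
      calc ‖f (ψ t) - p‖ = ‖f (ψ t) - f p‖ := by rw [hp']
        _ ≤ ‖ψ t - p‖ := hf _ _
    have h11 : ‖ψ t - p‖ ≤ (1 - t) * ‖q - p‖ + t * ‖ψ t - p‖ := by
      calc ‖ψ t - p‖ ≤ ‖(1 - t) • (q - p)‖ + ‖t • (f (ψ t) - p)‖ := by
            rw [e5]; exact norm_add_le _ _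
        _ ≤ (1 - t) * ‖q - p‖ + t * ‖ψ t - p‖ := by
            rw [norm_smul, norm_smul, Real.norm_eq_abs, Real.norm_eq_abs,
              abs_of_nonneg ht.1, abs_of_nonneg (by linarith [ht.2] : (0:ℝ) ≤ 1 - t)]
            nlinarith [h10, ht.1]
    have h12 : ‖ψ t - p‖ ≤ ‖q - p‖ := by
      have ht2 := ht.2
      nlinarith [h11]
    calc ‖ψ t‖ ≤ ‖ψ t - p‖ + ‖p‖ := by
          have e6 : ψ t = (ψ t - p) + p := by abel
          conv_lhs => rw [e6]
          exact norm_add_le _ _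
      _ ≤ ‖p‖ + ‖q - p‖ := by linarith
  obtain ⟨y, hy, hycl⟩ := limit_lemma f hf q ψ hψ (‖p‖ + ‖q - p‖) hbd2
  have hyR : R ≤ ‖y‖ := by
    have himg : ψ '' Set.Ico (0:ℝ) 1 ⊆ {z : V | R ≤ ‖z‖} := by
      rintro _ ⟨t, ht, rfl⟩
      exact (hgt t ht).le
    have hcl : IsClosed {z : V | R ≤ ‖z‖} :=
      isClosed_le continuous_const continuous_norm
    exact closure_minimal himg hcl hycl
  have : y ∈ Metric.ball (0:V) R := hsub hy
  rw [Metric.mem_ball, dist_zero_right] at this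
  linarith
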